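/- arXiv:2208.11861 — 6 statements merged into one kernel-verified Lean document; each statement's English description precedes it below -/
import Mathlib

section
/- The second derivative at t = 0 of the Kullback–Leibler divergence t ↦ D_KL(μ ‖ μ + tτ) equals the Fisher metric G_μ(τ,τ), i.e., d²/dt²|_{t=0} [−∫_M log(d(μ+tτ)/dμ) dμ] = ∫_M (dτ/dμ)² dμ. -/
open MeasureTheory Real Metric Filter Topology

/-- The second derivative at t = 0 of t ↦ D_KL(μ ‖ μ + tτ) equals the Fisher metric G_μ(τ,τ). -/
theorem stmt5 {M : Type*} [TopologicalSpace M] [CompactSpace M] [ConnectedSpace M]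
    [MeasurableSpace M] [BorelSpace M] (lam : Measure M) [IsProbabilityMeasure lam]
    (f : M → ℝ) (hf : Continuous f) (hfpos : ∀ x, 0 < f x) (hfint : ∫ x, f x ∂lam = 1)
    (h : M → ℝ) (hh : Continuous h) (hhint : ∫ x, h x ∂lam = 0)
    (C : ℝ) (hbound : ∀ x, |h x / f x| ≤ C) :
    deriv (deriv (fun t : ℝ => -∫ x, Real.log ((f x + t * h x) / f x) * f x ∂lam)) 0
      = ∫ x, (h x / f x) ^ 2 * f x ∂lam := by
  obtain ⟨x₀⟩ : Nonempty M := inferInstance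
  have hC0 : 0 ≤ C := (abs_nonneg _).trans (hbound x₀)
  set g : M → ℝ := fun x => h x / f x with hgdef
  have hfne : ∀ x, f x ≠ 0 := fun x => (hfpos x).ne'
  have hgc : Continuous g := hh.div hf hfne
  have hgb : ∀ x, |g x| ≤ C := hbound
  have cint : ∀ (k : M → ℝ), Continuous k → Integrable k lam := fun k hk =>
    hk.integrable_of_hasCompactSupport (HasCompactSupport.of_compactSpace k)
  set ε : ℝ := 1 / (2 * (C + 1)) with hεdef
  have hε : 0 < ε := by positivity
  have hεC : ε * C ≤ 1 / 2 := by
    rw [hεdef, div_mul_eq_mul_div, div_le_div_iff₀ (by positivity) two_pos]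
    nlinarith
  have hpos : ∀ t : ℝ, |t| < ε → ∀ x, (1 : ℝ) / 2 ≤ 1 + t * g x := by
    intro t ht x
    have h1 : |t * g x| ≤ 1 / 2 := by
      rw [abs_mul]
      calc |t| * |g x| ≤ ε * C :=
            mul_le_mul ht.le (hgb x) (abs_nonneg _) hε.le
        _ ≤ 1 / 2 := hεC
    have h2 := neg_abs_le (t * g x)
    linarith
  have hposne : ∀ t : ℝ, |t| < ε → ∀ x, 1 + t * g x ≠ 0 := fun t ht x => by
    have := hpos t ht x; linarith
  -- rewrite the integrand
  have hrw : ∀ (t : ℝ) (x : M), (f x + t * h x) / f x = 1 + t * g x := by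
    intro t x
    show (f x + t * h x) / f x = 1 + t * (h x / f x)
    rw [add_div, div_self (hfne x), mul_div_assoc]
  -- first derivative under the integral
  have hD1 : ∀ t₀ : ℝ, |t₀| < ε →
      HasDerivAt (fun t => ∫ x, Real.log (1 + t * g x) * f x ∂lam)
        (∫ x, g x / (1 + t₀ * g x) * f x ∂lam) t₀ := by
    intro t₀ ht₀
    have hε' : 0 < ε - |t₀| := by linarith
    have hball : ∀ t ∈ ball t₀ (ε - |t₀|), |t| < ε := by
      intro t ht
      have : |t - t₀| < ε - |t₀| := by simpa [Real.dist_eq] using ht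
      calc |t| = |t - t₀ + t₀| := by ring_nf
        _ ≤ |t - t₀| + |t₀| := abs_add_le _ _
        _ < ε := by linarith
    refine (hasDerivAt_integral_of_dominated_loc_of_deriv_le (s := ball t₀ (ε - |t₀|))
      (F' := fun t x => g x / (1 + t * g x) * f x)
      (bound := fun x => 2 * C * f x) (ball_mem_nhds t₀ hε') ?_ ?_ ?_ ?_ ?_ ?_).2
    · filter_upwards [Metric.ball_mem_nhds t₀ hε'] with t ht
      have ht' := hball t ht
      exact (((continuous_const.add (continuous_const.mul hgc)).log
        (fun x => hposne t ht' x)).mul hf).aestronglyMeasurable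
    · exact cint _ (((continuous_const.add (continuous_const.mul hgc)).log
        (fun x => hposne t₀ ht₀ x)).mul hf)
    · exact ((hgc.div (continuous_const.add (continuous_const.mul hgc))
        (fun x => hposne t₀ ht₀ x)).mul hf).aestronglyMeasurable
    · refine Filter.Eventually.of_forall fun x => fun t ht => ?_
      have ht' := hball t ht
      have hp := hpos t ht' x
      rw [Real.norm_eq_abs, abs_mul, abs_div, abs_of_pos (hfpos x),
        abs_of_pos (by linarith : (0:ℝ) < 1 + t * g x)]
      have hkey : |g x| / (1 + t * g x) ≤ 2 * C := by
        rw [div_le_iff₀ (by linarith : (0:ℝ) < 1 + t * g x)]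
        nlinarith [hgb x, abs_nonneg (g x)]
      exact mul_le_mul_of_nonneg_right hkey (hfpos x).le
    · exact cint _ ((continuous_const.mul hf))
    · refine Filter.Eventually.of_forall fun x => fun t ht => ?_
      have ht' := hball t ht
      have h1 : HasDerivAt (fun t : ℝ => 1 + t * g x) (g x) t := by
        simpa using ((hasDerivAt_id t).mul_const (g x)).const_add 1
      exact (h1.log (hposne t ht' x)).mul_const (f x)
  -- second derivative under the integral, at 0
  have hD2 : HasDerivAt (fun t => ∫ x, g x / (1 + t * g x) * f x ∂lam)
      (∫ x, -((g x) ^ 2 / (1 + (0:ℝ) * g x) ^ 2) * f x ∂lam) 0 := by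
    refine (hasDerivAt_integral_of_dominated_loc_of_deriv_le (s := ball (0:ℝ) ε)
      (F' := fun t x => -((g x) ^ 2 / (1 + t * g x) ^ 2) * f x)
      (bound := fun x => 4 * C ^ 2 * f x) (ball_mem_nhds (0:ℝ) hε) ?_ ?_ ?_ ?_ ?_ ?_).2
    · have hnhds : ∀ᶠ t in 𝓝 (0:ℝ), |t| < ε := by
        filter_upwards [Metric.ball_mem_nhds (0:ℝ) hε] with t ht
        simpa [Real.dist_eq] using ht
      filter_upwards [hnhds] with t ht
      exact ((hgc.div (continuous_const.add (continuous_const.mul hgc))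
        (fun x => hposne t ht x)).mul hf).aestronglyMeasurable
    · refine cint _ ((hgc.div (continuous_const.add (continuous_const.mul hgc))
        (fun x => hposne 0 (by simpa using hε) x)).mul hf)
    · refine (((hgc.pow 2).div ((continuous_const.add
        (continuous_const.mul hgc)).pow 2)
        (fun x => pow_ne_zero 2 (hposne 0 (by simpa using hε) x))).neg.mul
        hf).aestronglyMeasurable
    · refine Filter.Eventually.of_forall fun x => fun t ht => ?_
      have ht' : |t| < ε := by simpa [Real.dist_eq] using ht
      have hp := hpos t ht' x
      have hden : (1:ℝ)/4 ≤ (1 + t * g x) ^ 2 := by nlinarith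
      rw [Real.norm_eq_abs, abs_mul, abs_neg, abs_div, abs_of_pos (hfpos x),
        abs_of_pos (by nlinarith : (0:ℝ) < (1 + t * g x) ^ 2), abs_pow, sq_abs]
      have hkey : g x ^ 2 / (1 + t * g x) ^ 2 ≤ 4 * C ^ 2 := by
        rw [div_le_iff₀ (by nlinarith : (0:ℝ) < (1 + t * g x) ^ 2)]
        nlinarith [hgb x, abs_nonneg (g x), sq_abs (g x), sq_nonneg (g x)]
      exact mul_le_mul_of_nonneg_right hkey (hfpos x).le
    · exact cint _ (continuous_const.mul hf)
    · refine Filter.Eventually.of_forall fun x => fun t ht => ?_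
      have ht' : |t| < ε := by simpa [Real.dist_eq] using ht
      have h1 : HasDerivAt (fun t : ℝ => 1 + t * g x) (g x) t := by
        simpa using ((hasDerivAt_id t).mul_const (g x)).const_add 1
      have h2 := ((h1.inv (hposne t ht' x)).const_mul (g x)).mul_const (f x)
      show HasDerivAt (fun y : ℝ => g x / (1 + y * g x) * f x)
        (-(g x ^ 2 / (1 + t * g x) ^ 2) * f x) t
      have hfun2 : (fun y : ℝ => g x / (1 + y * g x) * f x)
          = fun y : ℝ => g x * (1 + y * g x)⁻¹ * f x := by
        funext y; rw [div_eq_mul_inv]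
      rw [hfun2, show -(g x ^ 2 / (1 + t * g x) ^ 2) * f x
          = g x * (-g x / (1 + t * g x) ^ 2) * f x by ring]
      exact h2
  -- put everything together
  have hfun : (fun t : ℝ => -∫ x, Real.log ((f x + t * h x) / f x) * f x ∂lam)
      = fun t : ℝ => -∫ x, Real.log (1 + t * g x) * f x ∂lam := by
    funext t
    simp_rw [hrw]
  rw [hfun]
  have hEq : ∀ᶠ t in 𝓝 (0:ℝ),
      deriv (fun t : ℝ => -∫ x, Real.log (1 + t * g x) * f x ∂lam) t
        = -∫ x, g x / (1 + t * g x) * f x ∂lam := by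
    have hnhds : ∀ᶠ t in 𝓝 (0:ℝ), |t| < ε := by
      filter_upwards [Metric.ball_mem_nhds (0:ℝ) hε] with t ht
      simpa [Real.dist_eq] using ht
    filter_upwards [hnhds] with t ht
    exact ((hD1 t ht).neg).deriv
  have : deriv (deriv (fun t : ℝ => -∫ x, Real.log (1 + t * g x) * f x ∂lam)) 0
      = deriv (fun t : ℝ => -∫ x, g x / (1 + t * g x) * f x ∂lam) 0 := by
    apply Filter.EventuallyEq.deriv_eq
    exact hEq
  rw [this, show (fun t : ℝ => -∫ x, g x / (1 + t * g x) * f x ∂lam)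
      = -(fun t : ℝ => ∫ x, g x / (1 + t * g x) * f x ∂lam) from rfl, (hD2.neg).deriv]
  rw [← integral_neg]
  congr 1
  funext x
  simp
  exact Or.inl rfl
end

section
/- For any unit-Fisher-norm tangent vector τ at μ ∈ 𝒫⁺(M), the geodesic μ(t) = (cos(t/2) + sin(t/2)·(dτ/dμ))²·μ leaves 𝒫⁺(M) at t = π: the density of μ(π) = (dτ/dμ)²·μ vanishes at some point of M, so μ(π) ∉ 𝒫⁺(M). -/
open MeasureTheory Real

lemma aux_pos_integral {M : Type*} [TopologicalSpace M] [CompactSpace M]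
    [MeasurableSpace M] [BorelSpace M] (lam : Measure M) [IsProbabilityMeasure lam]
    (h : M → ℝ) (hh : Continuous h) (hpos : ∀ x, 0 < h x) :
    0 < ∫ x, h x ∂lam := by
  have hint : Integrable h lam := hh.integrable_of_hasCompactSupport
    (HasCompactSupport.of_compactSpace h)
  rw [integral_pos_iff_support_of_nonneg (fun x => (hpos x).le) hint]
  have : Function.support h = Set.univ := by
    ext x; simp [Function.support, (hpos x).ne']
  rw [this]
  simp

/-- The density (dτ/dμ)²·f of μ(π) vanishes somewhere on M, hence μ(π) ∉ 𝒫⁺(M). -/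
theorem stmt7 {M : Type*} [TopologicalSpace M] [CompactSpace M] [ConnectedSpace M]
    [MeasurableSpace M] [BorelSpace M] (lam : Measure M) [IsProbabilityMeasure lam]
    (f : M → ℝ) (hf : Continuous f) (hfpos : ∀ x, 0 < f x) (hfint : ∫ x, f x ∂lam = 1)
    (h : M → ℝ) (hh : Continuous h) (hhint : ∫ x, h x ∂lam = 0)
    (hnorm : ∫ x, (h x / f x) ^ 2 * f x ∂lam = 1) :
    (∃ x, (h x / f x) ^ 2 * f x = 0) ∧
    ¬ (∀ x, 0 < (h x / f x) ^ 2 * f x) := by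
  have hzero : ∃ x, h x = 0 := by
    by_contra hc
    push_neg at hc
    -- M is nonempty (probability measure)
    have hne : Nonempty M := by
      by_contra hempty
      rw [not_nonempty_iff] at hempty
      rw [integral_of_isEmpty] at hnorm
      exact one_ne_zero hnorm.symm
    obtain ⟨x0⟩ := hne
    -- image of h is preconnected, so h has constant sign
    have himg : IsPreconnected (h '' Set.univ) :=
      (isPreconnected_univ).image h hh.continuousOn
    have hsign : (∀ x, 0 < h x) ∨ (∀ x, h x < 0) := by
      rcases lt_or_gt_of_ne (hc x0) with hneg | hpos
      · right
        intro x
        by_contra hx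
        push_neg at hx
        have hx' : 0 < h x := lt_of_le_of_ne hx (Ne.symm (hc x))
        have : (0 : ℝ) ∈ h '' Set.univ := by
          have : Set.Icc (h x0) (h x) ⊆ h '' Set.univ :=
            himg.ordConnected.out ⟨x0, trivial, rfl⟩ ⟨x, trivial, rfl⟩
          exact this ⟨hneg.le, hx'.le⟩
        obtain ⟨y, _, hy⟩ := this
        exact hc y hy
      · left
        intro x
        by_contra hx
        push_neg at hx
        have hx' : h x < 0 := lt_of_le_of_ne hx (hc x)
        have : (0 : ℝ) ∈ h '' Set.univ := by
          have : Set.Icc (h x) (h x0) ⊆ h '' Set.univ :=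
            himg.ordConnected.out ⟨x, trivial, rfl⟩ ⟨x0, trivial, rfl⟩
          exact this ⟨hx'.le, hpos.le⟩
        obtain ⟨y, _, hy⟩ := this
        exact hc y hy
    rcases hsign with hpos | hneg
    · have := aux_pos_integral lam h hh hpos
      rw [hhint] at this
      exact lt_irrefl 0 this
    · have := aux_pos_integral lam (fun x => -h x) (hh.neg) (fun x => neg_pos.mpr (hneg x))
      rw [integral_neg, hhint, neg_zero] at this
      exact lt_irrefl 0 this
  obtain ⟨x, hx⟩ := hzero
  have hval : (h x / f x) ^ 2 * f x = 0 := by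
    rw [hx]; simp
  exact ⟨⟨x, hval⟩, fun hall => absurd hval (hall x).ne'⟩
end

section
/- With a(t) = sin²((ℓ−t)/2)/sin²(ℓ/2), b(t) = sin²(t/2)/sin²(ℓ/2), c(t) = 2cos(ℓ/2)·sin((ℓ−t)/2)sin(t/2)/sin²(ℓ/2), one has a(t), b(t), c(t) ≥ 0 and a(t) + b(t) + c(t) = 1 for all t ∈ [0,ℓ], where 0 < ℓ < π; moreover the Fisher geodesic from μ to μ₁ satisfies μ(t) = a(t)μ + b(t)μ₁ + c(t)σ(μ,μ₁), so μ(t) lies in the 2-simplex spanned by μ, μ₁ and the normalized geometric mean σ(μ,μ₁), and hence μ(t) ∈ 𝒫⁺(M) for all t ∈ [0,ℓ]. -/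
open MeasureTheory Real

set_option maxHeartbeats 800000 in
lemma fisher_aux (S c Ct St F U : ℝ) (hc : c ≠ 0) (hS : S ≠ 0) (hF : F ≠ 0) :
    (Ct + St * ((S / c)⁻¹ * (c⁻¹ * U * F - F) / F)) ^ 2 * F
      = (S * Ct - c * St) ^ 2 / S ^ 2 * F + St ^ 2 / S ^ 2 * (U ^ 2 * F)
        + 2 * c * ((S * Ct - c * St) * St) / S ^ 2 * (c⁻¹ * U * F) := by
  field_simp
  ring

set_option maxHeartbeats 1600000 in
/-- The Fisher geodesic lies in the 2-simplex spanned by μ, μ₁ and the normalized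
geometric mean σ(μ,μ₁): μ(t) = a(t)μ + b(t)μ₁ + c(t)σ(μ,μ₁) with a,b,c ≥ 0 summing
to 1, hence μ(t) ∈ 𝒫⁺(M) for t ∈ [0,ℓ]. -/
theorem stmt10 {M : Type*} [TopologicalSpace M] [CompactSpace M] [ConnectedSpace M]
    [MeasurableSpace M] [BorelSpace M] (lam : Measure M) [IsProbabilityMeasure lam]
    (f f₁ : M → ℝ) (hf : Continuous f) (hf₁ : Continuous f₁)
    (hfpos : ∀ x, 0 < f x) (hf₁pos : ∀ x, 0 < f₁ x)
    (hfint : ∫ x, f x ∂lam = 1) (hf₁int : ∫ x, f₁ x ∂lam = 1)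
    (hne : f ≠ f₁)
    (c : ℝ) (hc : c = ∫ x, Real.sqrt (f x * f₁ x) ∂lam)
    (ℓ : ℝ) (hℓ : ℓ = 2 * Real.arccos c) (hℓ0 : 0 < ℓ) (hℓπ : ℓ < Real.pi)
    (s : M → ℝ) (hs : ∀ x, s x = c⁻¹ * Real.sqrt (f₁ x / f x) * f x)
    (tau : M → ℝ) (htau : ∀ x, tau x = (Real.tan (ℓ / 2))⁻¹ * (s x - f x))
    (g : ℝ → M → ℝ)
    (hg : ∀ t x, g t x = (Real.cos (t / 2) + Real.sin (t / 2) * (tau x / f x)) ^ 2 * f x)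
    (a b cc : ℝ → ℝ)
    (ha : ∀ t, a t = Real.sin ((ℓ - t) / 2) ^ 2 / Real.sin (ℓ / 2) ^ 2)
    (hb : ∀ t, b t = Real.sin (t / 2) ^ 2 / Real.sin (ℓ / 2) ^ 2)
    (hcc : ∀ t, cc t = 2 * Real.cos (ℓ / 2) * (Real.sin ((ℓ - t) / 2) * Real.sin (t / 2))
        / Real.sin (ℓ / 2) ^ 2) :
    ∀ t ∈ Set.Icc (0 : ℝ) ℓ,
      0 ≤ a t ∧ 0 ≤ b t ∧ 0 ≤ cc t ∧ a t + b t + cc t = 1 ∧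
      (∀ x, g t x = a t * f x + b t * f₁ x + cc t * s x) ∧
      (∀ x, 0 < g t x) := by
  have hpi := Real.pi_pos
  have hcle : c < 1 := by
    by_contra h
    push_neg at h
    have h0 : Real.arccos c = 0 := Real.arccos_eq_zero.2 h
    rw [h0] at hℓ; linarith
  have hcge : -1 ≤ c := by
    by_contra h
    push_neg at h
    have h0 : Real.arccos c = Real.pi := Real.arccos_eq_pi.2 h.le
    rw [h0] at hℓ; linarith
  have hcos : Real.cos (ℓ / 2) = c := by
    rw [hℓ, show 2 * Real.arccos c / 2 = Real.arccos c by ring]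
    exact Real.cos_arccos hcge hcle.le
  have hc0 : 0 < c := by
    rw [← hcos]
    apply Real.cos_pos_of_mem_Ioo
    constructor <;> [linarith; linarith]
  have hS : 0 < Real.sin (ℓ / 2) :=
    Real.sin_pos_of_pos_of_lt_pi (by linarith) (by linarith)
  have hS2 : Real.sin (ℓ / 2) ^ 2 = 1 - c ^ 2 := by
    have := Real.sin_sq_add_cos_sq (ℓ / 2)
    rw [hcos] at this; linarith
  have htan : Real.tan (ℓ / 2) = Real.sin (ℓ / 2) / c := by
    rw [Real.tan_eq_sin_div_cos, hcos]
  have hSne : Real.sin (ℓ / 2) ≠ 0 := ne_of_gt hS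
  have hcne : c ≠ 0 := ne_of_gt hc0
  intro t ht
  obtain ⟨ht0, htℓ⟩ := ht
  have hSt : 0 ≤ Real.sin (t / 2) :=
    Real.sin_nonneg_of_nonneg_of_le_pi (by linarith) (by linarith)
  have hSlt : 0 ≤ Real.sin ((ℓ - t) / 2) :=
    Real.sin_nonneg_of_nonneg_of_le_pi (by linarith) (by linarith)
  have hsplit : Real.sin ((ℓ - t) / 2)
      = Real.sin (ℓ / 2) * Real.cos (t / 2) - c * Real.sin (t / 2) := by
    rw [show (ℓ - t) / 2 = ℓ / 2 - t / 2 by ring, Real.sin_sub, hcos]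
  have hA : 0 ≤ a t := by rw [ha]; positivity
  have hB : 0 ≤ b t := by rw [hb]; positivity
  have hC : 0 ≤ cc t := by
    rw [hcc, hcos]
    apply div_nonneg _ (sq_nonneg _)
    have : 0 ≤ Real.sin ((ℓ - t) / 2) * Real.sin (t / 2) := mul_nonneg hSlt hSt
    nlinarith
  have hsum : a t + b t + cc t = 1 := by
    rw [ha, hb, hcc, hsplit, hcos]
    have hpyt := Real.sin_sq_add_cos_sq (t / 2)
    field_simp
    nlinarith [hpyt, hS2]
  have hgx : ∀ x, g t x = a t * f x + b t * f₁ x + cc t * s x := by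
    intro x
    have hF := hfpos x
    have hF1 := hf₁pos x
    have hFne : f x ≠ 0 := ne_of_gt hF
    rw [hg, htau, hs, htan, ha, hb, hcc, hsplit, hcos]
    set u := Real.sqrt (f₁ x / f x) with hu_def
    have hu : u ^ 2 = f₁ x / f x := Real.sq_sqrt (by positivity)
    have hf1eq : f₁ x = u ^ 2 * f x := by
      rw [hu]; field_simp
    rw [hf1eq]
    exact fisher_aux (Real.sin (ℓ / 2)) c (Real.cos (t / 2)) (Real.sin (t / 2))
      (f x) u hcne hSne hFne
  refine ⟨hA, hB, hC, hsum, hgx, ?_⟩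
  intro x
  have hF := hfpos x
  have hF1 := hf₁pos x
  have hsx : 0 < s x := by
    rw [hs]
    have : 0 < Real.sqrt (f₁ x / f x) := Real.sqrt_pos.2 (by positivity)
    positivity
  rw [hgx x]
  have hone : 0 < a t ∨ 0 < b t ∨ 0 < cc t := by
    by_contra h
    push_neg at h
    obtain ⟨h1, h2, h3⟩ := h
    linarith
  rcases hone with h | h | h
  · linarith [mul_nonneg hB hF1.le, mul_nonneg hC hsx.le, mul_pos h hF]
  · linarith [mul_nonneg hA hF.le, mul_nonneg hC hsx.le, mul_pos h hF1]
  · linarith [mul_nonneg hA hF.le, mul_nonneg hB hF1.le, mul_pos h hsx]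
end

section
/- For α ∈ ℝ, the α-connection ∇^{(α)}_τ τ₁ = −((1+α)/2)·((dτ/dμ)(dτ₁/dμ) − G_μ(τ,τ₁))·μ and its dual ∇^{(−α)} satisfy the duality relation with respect to the Fisher metric on constant vector fields: τ(G(τ₁,τ₂)) = G_μ(∇^{(α)}_τ τ₁, τ₂) + G_μ(τ₁, ∇^{(−α)}_τ τ₂), where the left-hand side is the derivative d/dt|_{t=0} G_{μ+tτ}(τ₁,τ₂). -/
open MeasureTheory Real

/-- Duality of the α-connections ∇^{(α)}, ∇^{(−α)} with respect to the Fisher metric on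
constant vector fields: τ G(τ₁,τ₂) = G_μ(∇^{(α)}_τ τ₁, τ₂) + G_μ(τ₁, ∇^{(−α)}_τ τ₂). -/
theorem stmt13 {M : Type*} [TopologicalSpace M] [CompactSpace M] [ConnectedSpace M]
    [MeasurableSpace M] [BorelSpace M] (lam : Measure M) [IsProbabilityMeasure lam]
    (f : M → ℝ) (hf : Continuous f) (hfpos : ∀ x, 0 < f x) (hfint : ∫ x, f x ∂lam = 1)
    (h h₁ h₂ : M → ℝ) (hh : Continuous h) (hh₁ : Continuous h₁) (hh₂ : Continuous h₂)
    (hhint : ∫ x, h x ∂lam = 0) (hh₁int : ∫ x, h₁ x ∂lam = 0) (hh₂int : ∫ x, h₂ x ∂lam = 0)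
    (c : ℝ) (hc : c < 1) (hbound : ∀ x, |h x / f x| ≤ c)
    (α : ℝ)
    (Gm : (M → ℝ) → (M → ℝ) → ℝ)
    (hGm : ∀ a b : M → ℝ, Gm a b = ∫ x, (a x / f x) * (b x / f x) * f x ∂lam)
    (nabP nabM : M → ℝ)
    (hnabP : ∀ x, nabP x = -((1 + α) / 2) * ((h x / f x) * (h₁ x / f x) - Gm h h₁) * f x)
    (hnabM : ∀ x, nabM x = -((1 + (-α)) / 2) * ((h x / f x) * (h₂ x / f x) - Gm h h₂) * f x) :
    deriv (fun t : ℝ =>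
        ∫ x, (h₁ x / (f x + t * h x)) * (h₂ x / (f x + t * h x)) * (f x + t * h x) ∂lam) 0
      = Gm nabP h₂ + Gm h₁ nabM := by
  have hNe : Nonempty M := by
    by_contra hN
    rw [not_nonempty_iff] at hN
    have h1 : lam Set.univ = 1 := measure_univ
    rw [Set.univ_eq_empty_iff.mpr hN, measure_empty] at h1
    exact zero_ne_one h1
  -- lower bound for f
  obtain ⟨x₀, -, hx₀⟩ := isCompact_univ.exists_isMinOn Set.univ_nonempty hf.continuousOn
  set δ := f x₀ with hδdef
  have hδ : 0 < δ := hfpos x₀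
  have hδle : ∀ x, δ ≤ f x := fun x => hx₀ (Set.mem_univ x)
  have hc0 : 0 ≤ c := (abs_nonneg _).trans (hbound x₀)
  -- |h x| ≤ c * f x
  have hhb : ∀ x, |h x| ≤ c * f x := by
    intro x
    have hb := hbound x
    have hfx := hfpos x
    rw [abs_div, abs_of_pos hfx, div_le_iff₀ hfx] at hb
    exact hb
  -- denominator lower bound
  have hden : ∀ t : ℝ, |t| ≤ 1 → ∀ x, (1 - c) * δ ≤ f x + t * h x := by
    intro t ht x
    have h2 : |t * h x| ≤ c * f x := by
      rw [abs_mul]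
      calc |t| * |h x| ≤ 1 * (c * f x) :=
            mul_le_mul ht (hhb x) (abs_nonneg _) zero_le_one
        _ = c * f x := one_mul _
    have h3 := neg_abs_le (t * h x)
    have h4 := hδle x
    nlinarith [hfpos x]
  have hm : 0 < (1 - c) * δ := mul_pos (by linarith) hδ
  have hdpos : ∀ t : ℝ, |t| ≤ 1 → ∀ x, 0 < f x + t * h x :=
    fun t ht x => lt_of_lt_of_le hm (hden t ht x)
  -- integrability of continuous functions
  have hint : ∀ g : M → ℝ, Continuous g → Integrable g lam := by
    intro g hg
    obtain ⟨xg, -, hxg⟩ := isCompact_univ.exists_isMaxOn Set.univ_nonempty hg.abs.continuousOn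
    refine ⟨hg.aestronglyMeasurable, ?_⟩
    apply HasFiniteIntegral.of_bounded (C := |g xg|)
    refine ae_of_all _ fun x => ?_
    rw [Real.norm_eq_abs]
    exact hxg (Set.mem_univ x)
  -- bound for the derivative integrand
  obtain ⟨xm, -, hxm⟩ := isCompact_univ.exists_isMaxOn Set.univ_nonempty
    ((hh₁.mul hh₂).mul hh).abs.continuousOn
  set K := |h₁ xm * h₂ xm * h xm| with hKdef
  have hK : ∀ x, |h₁ x * h₂ x * h x| ≤ K := fun x => hxm (Set.mem_univ x)
  have hK0 : 0 ≤ K := abs_nonneg _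
  -- the main derivative computation
  set F : ℝ → M → ℝ := fun t x => h₁ x * h₂ x / (f x + t * h x) with hF
  set F' : ℝ → M → ℝ := fun t x => -(h₁ x * h₂ x * h x) / (f x + t * h x) ^ 2 with hF'
  have hcont : ∀ t : ℝ, |t| ≤ 1 → Continuous (F t) := by
    intro t ht
    exact (hh₁.mul hh₂).div (hf.add (continuous_const.mul hh))
      (fun x => (hdpos t ht x).ne')
  have hcont' : ∀ t : ℝ, |t| ≤ 1 → Continuous (F' t) := by
    intro t ht
    exact (((hh₁.mul hh₂).mul hh).neg).div
      ((hf.add (continuous_const.mul hh)).pow 2)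
      (fun x => pow_ne_zero 2 (hdpos t ht x).ne')
  have key := hasDerivAt_integral_of_dominated_loc_of_deriv_le (μ := lam)
      (F := F) (F' := F') (x₀ := (0:ℝ)) (s := Metric.ball (0:ℝ) 1)
      (bound := fun _ => K / ((1 - c) * δ) ^ 2) (Metric.ball_mem_nhds (0:ℝ) one_pos)
      ?meas ?int ?meas' ?bnd ?bint ?diff
  case meas =>
    filter_upwards [Metric.ball_mem_nhds (0:ℝ) one_pos] with t ht
    exact (hcont t (le_of_lt (by simpa [Real.norm_eq_abs] using Metric.mem_ball.mp ht))).aestronglyMeasurable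
  case int =>
    exact hint (F 0) (hcont 0 (by simp))
  case meas' =>
    exact (hcont' 0 (by simp)).aestronglyMeasurable
  case bnd =>
    refine ae_of_all _ fun x t ht => ?_
    have ht' : |t| ≤ 1 := le_of_lt (by simpa [Real.norm_eq_abs] using Metric.mem_ball.mp ht)
    have hd := hden t ht' x
    have hd0 := hdpos t ht' x
    rw [Real.norm_eq_abs, hF', abs_div, abs_neg, abs_of_pos (pow_pos hd0 2)]
    exact div_le_div₀ hK0 (hK x) (pow_pos hm 2) (pow_le_pow_left₀ hm.le hd 2)
  case bint =>
    exact integrable_const _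
  case diff =>
    refine ae_of_all _ fun x t ht => ?_
    have ht' : |t| ≤ 1 := le_of_lt (by simpa [Real.norm_eq_abs] using Metric.mem_ball.mp ht)
    have hd0 := (hdpos t ht' x).ne'
    have hder : HasDerivAt (fun s : ℝ => f x + s * h x) (h x) t := by
      simpa using ((hasDerivAt_id t).mul_const (h x)).const_add (f x)
    have := (hasDerivAt_const t (h₁ x * h₂ x)).div hder hd0
    rw [zero_mul, zero_sub] at this
    exact this
  -- equality of the two functions of t near 0
  have hEq : (fun t : ℝ =>
      ∫ x, (h₁ x / (f x + t * h x)) * (h₂ x / (f x + t * h x)) * (f x + t * h x) ∂lam)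
      =ᶠ[nhds (0:ℝ)] fun t => ∫ x, F t x ∂lam := by
    filter_upwards [Metric.ball_mem_nhds (0:ℝ) one_pos] with t ht
    have ht' : |t| ≤ 1 := le_of_lt (by simpa [Real.norm_eq_abs] using Metric.mem_ball.mp ht)
    refine integral_congr_ae (ae_of_all _ fun x => ?_)
    have hd0 := (hdpos t ht' x).ne'
    simp only [hF]
    field_simp
  have hderiv : deriv (fun t : ℝ =>
      ∫ x, (h₁ x / (f x + t * h x)) * (h₂ x / (f x + t * h x)) * (f x + t * h x) ∂lam) 0
      = ∫ x, F' 0 x ∂lam := by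
    rw [hEq.deriv_eq]
    exact key.2.deriv
  rw [hderiv]
  -- now compute both sides explicitly
  set I : ℝ := ∫ x, h x * h₁ x * h₂ x / (f x) ^ 2 ∂lam with hI
  have hfne : ∀ x, f x ≠ 0 := fun x => (hfpos x).ne'
  have hcontI : Continuous fun x => h x * h₁ x * h₂ x / (f x) ^ 2 :=
    ((hh.mul hh₁).mul hh₂).div (hf.pow 2) (fun x => pow_ne_zero 2 (hfne x))
  have hLHS : ∫ x, F' 0 x ∂lam = -I := by
    rw [hI, ← integral_neg]
    refine integral_congr_ae (ae_of_all _ fun x => ?_)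
    simp only [hF', zero_mul, add_zero]
    ring
  have hGmP : Gm nabP h₂ = -((1 + α) / 2) * I := by
    rw [hGm]
    have hpt : ∀ x, (nabP x / f x) * (h₂ x / f x) * f x
        = -((1 + α) / 2) * (h x * h₁ x * h₂ x / (f x) ^ 2)
          - (-((1 + α) / 2) * Gm h h₁) * h₂ x := by
      intro x
      have hfx := hfne x
      rw [hnabP x, mul_div_cancel_right₀ _ hfx, mul_assoc, div_mul_cancel₀ _ hfx]
      field_simp
      ring
    simp_rw [hpt]
    rw [integral_sub (Integrable.const_mul (hint _ hcontI) _)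
        (Integrable.const_mul (hint _ hh₂) _),
      integral_const_mul, integral_const_mul, hh₂int, mul_zero, sub_zero, hI]
  have hGmM : Gm h₁ nabM = -((1 - α) / 2) * I := by
    rw [hGm]
    have hpt : ∀ x, (h₁ x / f x) * (nabM x / f x) * f x
        = -((1 - α) / 2) * (h x * h₁ x * h₂ x / (f x) ^ 2)
          - (-((1 - α) / 2) * Gm h h₂) * h₁ x := by
      intro x
      have hfx := hfne x
      rw [hnabM x, mul_div_cancel_right₀ _ hfx, mul_right_comm, div_mul_cancel₀ _ hfx]
      field_simp
      ring
    simp_rw [hpt]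
    rw [integral_sub (Integrable.const_mul (hint _ hcontI) _)
        (Integrable.const_mul (hint _ hh₁) _),
      integral_const_mul, integral_const_mul, hh₁int, mul_zero, sub_zero, hI]
  rw [hLHS, hGmP, hGmM]
  ring
end

section
/- The curvature tensor of the α-connection ∇^{(α)} on 𝒫⁺(M), computed on constant vector fields via R(τ₁,τ₂)τ = ∇_{τ₁}∇_{τ₂}τ − ∇_{τ₂}∇_{τ₁}τ, equals R^{(α)}_μ(τ₁,τ₂)τ = ((1−α²)/4)(G_μ(τ,τ₂)τ₁ − G_μ(τ,τ₁)τ₂); in particular ∇^{(α)} is flat if and only if α = ±1, and the Levi-Civita connection α = 0 has constant sectional curvature 1/4. -/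
open MeasureTheory Real

/-- The Fisher metric G_μ(τ,τ₁) = ∫ (dτ/dμ)(dτ₁/dμ) dμ at μ = f·λ, on densities. -/
noncomputable def fisherG {M : Type*} [MeasurableSpace M] (lam : MeasureTheory.Measure M)
    (f a b : M → ℝ) : ℝ :=
  ∫ x, (a x / f x) * (b x / f x) * f x ∂lam

/-- The α-connection ∇^{(α)}_τ τ₁ = −((1+α)/2)((dτ/dμ)(dτ₁/dμ) − G_μ(τ,τ₁))μ, on densities. -/
noncomputable def alphaConn {M : Type*} [MeasurableSpace M] (lam : MeasureTheory.Measure M)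
    (α : ℝ) (f h h₁ : M → ℝ) : M → ℝ :=
  fun x => -((1 + α) / 2) * ((h x / f x) * (h₁ x / f x) - fisherG lam f h h₁) * f x

/-- Covariant derivative along the constant vector field h at μ = f·λ of a vector field V
(depending on the base density): directional derivative plus the connection term. -/
noncomputable def covDeriv {M : Type*} [MeasurableSpace M] (lam : MeasureTheory.Measure M)
    (α : ℝ) (f h : M → ℝ) (V : (M → ℝ) → (M → ℝ)) : M → ℝ :=
  fun x => deriv (fun t : ℝ => V (fun y => f y + t * h y) x) 0 + alphaConn lam α f h (V f) x

lemma contIntegrable {M : Type*} [TopologicalSpace M] [CompactSpace M] [MeasurableSpace M]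
    [BorelSpace M] (lam : Measure M) [IsFiniteMeasure lam] {g : M → ℝ} (hg : Continuous g) :
    Integrable g lam := by
  obtain ⟨C, hC⟩ : ∃ C, ∀ x, ‖g x‖ ≤ C := by
    rcases isEmpty_or_nonempty M with h | h
    · exact ⟨0, fun x => isEmptyElim x⟩
    · obtain ⟨x₀, -, hx₀⟩ := isCompact_univ.exists_isMaxOn Set.univ_nonempty hg.norm.continuousOn
      exact ⟨‖g x₀‖, fun x => hx₀ (Set.mem_univ x)⟩
  exact ⟨hg.aestronglyMeasurable, HasFiniteIntegral.of_bounded (ae_of_all _ hC)⟩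

lemma hasDerivAt_int_div {M : Type*} [TopologicalSpace M] [CompactSpace M] [Nonempty M]
    [MeasurableSpace M] [BorelSpace M] (lam : Measure M) [IsFiniteMeasure lam]
    (f h a : M → ℝ) (hf : Continuous f) (hfpos : ∀ x, 0 < f x) (hh : Continuous h)
    (ha : Continuous a) :
    HasDerivAt (fun t : ℝ => ∫ y, a y / (f y + t * h y) ∂lam)
      (-∫ y, a y * h y / (f y) ^ 2 ∂lam) 0 := by
  obtain ⟨x₀, -, hx₀⟩ := isCompact_univ.exists_isMinOn Set.univ_nonempty hf.continuousOn
  set ε := f x₀ with hεdef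
  have hε0 : 0 < ε := hfpos x₀
  obtain ⟨x₁, -, hx₁⟩ := isCompact_univ.exists_isMaxOn Set.univ_nonempty hh.abs.continuousOn
  set K := |h x₁| with hKdef
  have hK0 : 0 ≤ K := abs_nonneg _
  set δ := ε / (2 * (K + 1)) with hδdef
  have hδ0 : 0 < δ := by positivity
  have hδK : δ * K ≤ ε / 2 := by
    rw [hδdef, div_mul_eq_mul_div, div_le_div_iff₀ (by positivity) (by norm_num)]
    nlinarith
  have hlow : ∀ t ∈ Metric.ball (0:ℝ) δ, ∀ y, ε / 2 ≤ f y + t * h y := by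
    intro t ht y
    have h1 : |t| < δ := by simpa [Real.dist_eq] using ht
    have h2 : |t * h y| ≤ δ * K := by
      rw [abs_mul]
      exact mul_le_mul h1.le (hx₁ (Set.mem_univ y)) (abs_nonneg _) hδ0.le
    have h3 : ε ≤ f y := hx₀ (Set.mem_univ y)
    have h4 : -(δ * K) ≤ t * h y := by
      have := neg_abs_le (t * h y); linarith
    linarith
  have main := hasDerivAt_integral_of_dominated_loc_of_deriv_le (μ := lam)
    (F := fun t y => a y / (f y + t * h y))
    (F' := fun t y => -(a y * h y) / (f y + t * h y) ^ 2) (x₀ := (0:ℝ))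
    (bound := fun y => |a y * h y| / (ε / 2) ^ 2) (Metric.ball_mem_nhds 0 hδ0)
    (Filter.Eventually.of_forall fun t =>
      (ha.measurable.div (hf.measurable.add ((hh.measurable).const_mul t))).aestronglyMeasurable)
    (by
      have : Continuous fun y => a y / (f y + 0 * h y) := by
        apply ha.div (by fun_prop)
        intro y; simpa using (hfpos y).ne'
      exact contIntegrable lam this)
    (((ha.measurable.mul hh.measurable).neg.div
      ((hf.measurable.add ((hh.measurable).const_mul 0)).pow_const 2)).aestronglyMeasurable)
    (ae_of_all _ fun y t ht => by
      have hg := hlow t ht y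
      have hg0 : 0 < f y + t * h y := lt_of_lt_of_le (by positivity) hg
      rw [Real.norm_eq_abs, abs_div, abs_neg, abs_of_pos (pow_pos hg0 2)]
      exact div_le_div_of_nonneg_left (abs_nonneg _) (by positivity)
        (pow_le_pow_left₀ (by positivity) hg 2))
    (contIntegrable lam ((ha.mul hh).abs.div_const _))
    (ae_of_all _ fun y t ht => by
      have hg := hlow t ht y
      have hg0 : (f y + t * h y) ≠ 0 := (lt_of_lt_of_le (by positivity) hg).ne'
      have hB : HasDerivAt (fun t : ℝ => f y + t * h y) (h y) t := by
        simpa using ((hasDerivAt_id t).mul_const (h y)).const_add (f y)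
      have := (hasDerivAt_const t (a y)).div hB hg0
      exact this.congr_deriv (by ring))
  have heq : (∫ y, -(a y * h y) / (f y + 0 * h y) ^ 2 ∂lam)
      = -∫ y, a y * h y / (f y) ^ 2 ∂lam := by
    rw [← integral_neg]
    apply integral_congr_ae (ae_of_all _ fun y => ?_)
    simp [neg_div]
  exact heq ▸ main.2

lemma fisherG_div {M : Type*} [MeasurableSpace M] (lam : Measure M) (g a b : M → ℝ) :
    fisherG lam g a b = ∫ y, a y * b y / g y ∂lam := by
  unfold fisherG
  apply integral_congr_ae (ae_of_all _ fun y => ?_)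
  rcases eq_or_ne (g y) 0 with hg | hg
  · simp [hg]
  · field_simp

lemma covDeriv_eval {M : Type*} [TopologicalSpace M] [CompactSpace M] [Nonempty M]
    [MeasurableSpace M] [BorelSpace M] (lam : Measure M) [IsFiniteMeasure lam]
    (α : ℝ) (f τ p q : M → ℝ) (hf : Continuous f) (hfpos : ∀ x, 0 < f x)
    (hτ : Continuous τ) (hp : Continuous p) (hq : Continuous q)
    (hpint : ∫ y, p y ∂lam = 0) (x : M) :
    covDeriv lam α f p (fun g => alphaConn lam α g q τ) x =
      (-((1 + α) / 2)) * (-(q x * τ x * p x / (f x) ^ 2)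
          + (∫ y, q y * τ y * p y / (f y) ^ 2 ∂lam) * f x - fisherG lam f q τ * p x)
      + (-((1 + α) / 2)) ^ 2 * (q x * τ x * p x / (f x) ^ 2 - fisherG lam f q τ * p x
          - (∫ y, q y * τ y * p y / (f y) ^ 2 ∂lam) * f x) := by
  have hd : f x ≠ 0 := (hfpos x).ne'
  have hΦeq : ∀ t : ℝ, fisherG lam (fun y => f y + t * p y) q τ
      = ∫ y, q y * τ y / (f y + t * p y) ∂lam := fun t => fisherG_div lam _ q τ
  -- derivative of the Φ part
  have hΨ := hasDerivAt_int_div lam f p (fun y => q y * τ y) hf hfpos hp (hq.mul hτ)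
  -- derivative of the base-point factor
  have hB : HasDerivAt (fun t : ℝ => f x + t * p x) (p x) 0 := by
    simpa using ((hasDerivAt_id (0:ℝ)).mul_const (p x)).const_add (f x)
  have hne : (f x + 0 * p x) ≠ 0 := by simpa using hd
  have hq' : HasDerivAt (fun t : ℝ => q x / (f x + t * p x)) (-(q x * p x) / (f x) ^ 2) 0 := by
    have := (hasDerivAt_const (0:ℝ) (q x)).div hB hne
    exact this.congr_deriv (by ring)
  have hτ' : HasDerivAt (fun t : ℝ => τ x / (f x + t * p x)) (-(τ x * p x) / (f x) ^ 2) 0 := by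
    have := (hasDerivAt_const (0:ℝ) (τ x)).div hB hne
    exact this.congr_deriv (by ring)
  set I : ℝ := ∫ y, q y * τ y * p y / (f y) ^ 2 ∂lam with hIdef
  set Gq : ℝ := fisherG lam f q τ with hGdef
  have h0 : (∫ y, q y * τ y / (f y + 0 * p y) ∂lam) = Gq := by
    rw [hGdef, fisherG_div]
    apply integral_congr_ae (ae_of_all _ fun y => by norm_num)
  have hbig : HasDerivAt
      (fun t : ℝ => -((1 + α) / 2) * ((q x / (f x + t * p x)) * (τ x / (f x + t * p x))
          - ∫ y, q y * τ y / (f y + t * p y) ∂lam) * (f x + t * p x))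
      (-((1 + α) / 2) * ((-(q x * p x) / (f x) ^ 2 * (τ x / (f x + 0 * p x))
            + q x / (f x + 0 * p x) * (-(τ x * p x) / (f x) ^ 2) - -I) * (f x + 0 * p x))
        + -((1 + α) / 2) * ((q x / (f x + 0 * p x)) * (τ x / (f x + 0 * p x)) - Gq) * p x) 0 := by
    have h1 := ((hq'.mul hτ').sub hΨ).const_mul (-((1 + α) / 2))
    have h2 := h1.mul hB
    exact h2.congr_deriv (by simp only [Pi.mul_apply, Pi.sub_apply]; rw [h0]; ring)
  -- the directional derivative equals the raw value above
  have hfun : (fun t : ℝ => alphaConn lam α (fun y => f y + t * p y) q τ x)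
      = fun t : ℝ => -((1 + α) / 2) * ((q x / (f x + t * p x)) * (τ x / (f x + t * p x))
          - ∫ y, q y * τ y / (f y + t * p y) ∂lam) * (f x + t * p x) := by
    funext t
    simp only [alphaConn, hΦeq]
  -- the connection term: compute fisherG lam f p (alphaConn lam α f q τ)
  have hW : fisherG lam f p (alphaConn lam α f q τ) = -((1 + α) / 2) * I := by
    have e1 : ∀ y, (p y / f y) * (alphaConn lam α f q τ y / f y) * f y
        = -((1 + α) / 2) * (q y * τ y * p y / (f y) ^ 2) - (-((1 + α) / 2) * Gq) * p y := by
      intro y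
      have hfy : f y ≠ 0 := (hfpos y).ne'
      simp only [alphaConn, ← hGdef]
      field_simp
      ring
    have int1 : Integrable (fun y => -((1 + α) / 2) * (q y * τ y * p y / (f y) ^ 2)) lam :=
      contIntegrable lam (continuous_const.mul (((hq.mul hτ).mul hp).div (hf.pow 2)
        (fun y => pow_ne_zero 2 (hfpos y).ne')))
    have int2 : Integrable (fun y => (-((1 + α) / 2) * Gq) * p y) lam :=
      contIntegrable lam (continuous_const.mul hp)
    unfold fisherG
    rw [integral_congr_ae (ae_of_all _ e1), integral_sub int1 int2,
      integral_const_mul, integral_const_mul, hpint, hIdef]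
    ring
  unfold covDeriv
  rw [hfun, hbig.deriv]
  simp only [alphaConn, ← hGdef, hW]
  have hred : f x + 0 * p x = f x := by ring
  rw [hred]
  field_simp
  ring

lemma fisherG_symm {M : Type*} [MeasurableSpace M] (lam : Measure M) (g a b : M → ℝ) :
    fisherG lam g a b = fisherG lam g b a := by
  unfold fisherG
  exact integral_congr_ae (ae_of_all _ fun y => by ring)

/-- The curvature of ∇^{(α)} on constant vector fields is
R^{(α)}(τ₁,τ₂)τ = ((1−α²)/4)(G(τ,τ₂)τ₁ − G(τ,τ₁)τ₂); in particular ∇^{(α)} is flat iff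
α = ±1, and for α = 0 (the Levi-Civita connection) the factor is 1/4. -/
theorem stmt14 {M : Type*} [TopologicalSpace M] [CompactSpace M] [ConnectedSpace M]
    [MeasurableSpace M] [BorelSpace M] (lam : Measure M) [IsProbabilityMeasure lam]
    (f : M → ℝ) (hf : Continuous f) (hfpos : ∀ x, 0 < f x) (hfint : ∫ x, f x ∂lam = 1)
    (τ h₁ h₂ : M → ℝ) (hτ : Continuous τ) (hh₁ : Continuous h₁) (hh₂ : Continuous h₂)
    (hτint : ∫ x, τ x ∂lam = 0) (hh₁int : ∫ x, h₁ x ∂lam = 0) (hh₂int : ∫ x, h₂ x ∂lam = 0)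
    (α : ℝ) :
    (∀ x, covDeriv lam α f h₁ (fun g => alphaConn lam α g h₂ τ) x
          - covDeriv lam α f h₂ (fun g => alphaConn lam α g h₁ τ) x
        = ((1 - α ^ 2) / 4) * (fisherG lam f τ h₂ * h₁ x - fisherG lam f τ h₁ * h₂ x)) ∧
    (((1 - α ^ 2) / 4 = 0) ↔ (α = 1 ∨ α = -1)) ∧
    ((1 - (0 : ℝ) ^ 2) / 4 = 1 / 4) := by
  refine ⟨fun x => ?_, ⟨fun h => ?_, fun h => ?_⟩, by norm_num⟩
  · rw [covDeriv_eval lam α f τ h₁ h₂ hf hfpos hτ hh₁ hh₂ hh₁int x,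
      covDeriv_eval lam α f τ h₂ h₁ hf hfpos hτ hh₂ hh₁ hh₂int x]
    have hIsymm : (∫ y, h₁ y * τ y * h₂ y / (f y) ^ 2 ∂lam)
        = ∫ y, h₂ y * τ y * h₁ y / (f y) ^ 2 ∂lam :=
      integral_congr_ae (ae_of_all _ fun y => by ring)
    rw [hIsymm, fisherG_symm lam f τ h₂, fisherG_symm lam f τ h₁]
    ring
  · have h2 : (α - 1) * (α + 1) = 0 := by nlinarith
    rcases mul_eq_zero.mp h2 with h | h
    · exact Or.inl (by linarith)
    · exact Or.inr (by linarith)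
  · rcases h with rfl | rfl <;> norm_num
end

section
/- The Fisher geodesic segment of Theorem on unique geodesics joining μ to μ₁ has midpoint μ(ℓ/2) equal to the normalized 1/2-power mean of μ and μ₁: the density of μ(ℓ/2) is proportional to (√f + √f₁)², i.e., μ(ℓ/2) = ((√f + √f₁)² / ∫_M (√f + √f₁)² dλ)·λ. -/
open MeasureTheory Real

/-- The midpoint μ(ℓ/2) of the Fisher geodesic is the normalized 1/2-power mean:
its density is (√f + √f₁)² / ∫ (√f + √f₁)² dλ. -/
theorem stmt15 {M : Type*} [TopologicalSpace M] [CompactSpace M] [ConnectedSpace M]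
    [MeasurableSpace M] [BorelSpace M] (lam : Measure M) [IsProbabilityMeasure lam]
    (f f₁ : M → ℝ) (hf : Continuous f) (hf₁ : Continuous f₁)
    (hfpos : ∀ x, 0 < f x) (hf₁pos : ∀ x, 0 < f₁ x)
    (hfint : ∫ x, f x ∂lam = 1) (hf₁int : ∫ x, f₁ x ∂lam = 1)
    (hne : f ≠ f₁)
    (c : ℝ) (hc : c = ∫ x, Real.sqrt (f x * f₁ x) ∂lam)
    (ℓ : ℝ) (hℓ : ℓ = 2 * Real.arccos c) (hℓ0 : 0 < ℓ) (hℓπ : ℓ < Real.pi)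
    (s : M → ℝ) (hs : ∀ x, s x = c⁻¹ * Real.sqrt (f₁ x / f x) * f x)
    (a b cc : ℝ → ℝ)
    (ha : ∀ t, a t = Real.sin ((ℓ - t) / 2) ^ 2 / Real.sin (ℓ / 2) ^ 2)
    (hb : ∀ t, b t = Real.sin (t / 2) ^ 2 / Real.sin (ℓ / 2) ^ 2)
    (hcc : ∀ t, cc t = 2 * Real.cos (ℓ / 2) * (Real.sin ((ℓ - t) / 2) * Real.sin (t / 2))
        / Real.sin (ℓ / 2) ^ 2)
    (g : ℝ → M → ℝ)
    (hg : ∀ t x, g t x = a t * f x + b t * f₁ x + cc t * s x) :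
    ∀ x, g (ℓ / 2) x
        = (Real.sqrt (f x) + Real.sqrt (f₁ x)) ^ 2
          / ∫ y, (Real.sqrt (f y) + Real.sqrt (f₁ y)) ^ 2 ∂lam := by
  -- basic facts about c
  have harc : ℓ / 2 = Real.arccos c := by rw [hℓ]; ring
  have hc1 : c < 1 := by
    have h0 : 0 < Real.arccos c := by rw [← harc]; linarith
    exact Real.arccos_pos.mp h0
  have hc0 : 0 < c := by
    have h0 : Real.arccos c < Real.pi / 2 := by rw [← harc]; linarith
    exact Real.arccos_lt_pi_div_two.mp h0
  have hcos : Real.cos (ℓ / 2) = c := by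
    rw [harc, Real.cos_arccos (by linarith) (by linarith)]
  have hsin2 : Real.sin (ℓ / 2) ^ 2 = 1 - c ^ 2 := by
    rw [harc, Real.sin_arccos, Real.sq_sqrt (by nlinarith)]
  have hsin4 : Real.sin (ℓ / 4) ^ 2 = (1 - c) / 2 := by
    have h2 : (2 : ℝ) * (ℓ / 4) = ℓ / 2 := by ring
    have := Real.sin_sq_eq_half_sub (ℓ / 4)
    rw [this, h2, hcos]; ring
  -- the integral
  have hint : ∫ y, (Real.sqrt (f y) + Real.sqrt (f₁ y)) ^ 2 ∂lam = 2 + 2 * c := by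
    have heq : ∀ y, (Real.sqrt (f y) + Real.sqrt (f₁ y)) ^ 2
        = f y + f₁ y + 2 * Real.sqrt (f y * f₁ y) := by
      intro y
      have h1 : Real.sqrt (f y) ^ 2 = f y := Real.sq_sqrt (hfpos y).le
      have h2 : Real.sqrt (f₁ y) ^ 2 = f₁ y := Real.sq_sqrt (hf₁pos y).le
      have h3 : Real.sqrt (f y) * Real.sqrt (f₁ y) = Real.sqrt (f y * f₁ y) :=
        (Real.sqrt_mul (hfpos y).le _).symm
      nlinarith [h1, h2, h3]
    have intf : Integrable f lam := by
      have := (hf.continuousOn : ContinuousOn f Set.univ).integrableOn_compact'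
        (μ := lam) isCompact_univ MeasurableSet.univ
      rwa [integrableOn_univ] at this
    have intf₁ : Integrable f₁ lam := by
      have := (hf₁.continuousOn : ContinuousOn f₁ Set.univ).integrableOn_compact'
        (μ := lam) isCompact_univ MeasurableSet.univ
      rwa [integrableOn_univ] at this
    have intsq : Integrable (fun y => Real.sqrt (f y * f₁ y)) lam := by
      have hcont : Continuous fun y => Real.sqrt (f y * f₁ y) :=
        (Real.continuous_sqrt).comp (hf.mul hf₁)
      have := (hcont.continuousOn : ContinuousOn _ Set.univ).integrableOn_compact'
        (μ := lam) isCompact_univ MeasurableSet.univ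
      rwa [integrableOn_univ] at this
    calc ∫ y, (Real.sqrt (f y) + Real.sqrt (f₁ y)) ^ 2 ∂lam
        = ∫ y, (f y + f₁ y + 2 * Real.sqrt (f y * f₁ y)) ∂lam := by
          exact integral_congr_ae (Filter.Eventually.of_forall heq)
      _ = (∫ y, (f y + f₁ y) ∂lam) + ∫ y, 2 * Real.sqrt (f y * f₁ y) ∂lam := by
          exact integral_add (intf.add intf₁) (intsq.const_mul 2)
      _ = 2 + 2 * c := by
          rw [integral_add intf intf₁, hfint, hf₁int, integral_const_mul, ← hc]; ring
  -- pointwise computation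
  intro x
  rw [hg, ha, hb, hcc, hs, hint]
  have hℓm : (ℓ - ℓ / 2) / 2 = ℓ / 4 := by ring
  have hℓm2 : ℓ / 2 / 2 = ℓ / 4 := by ring
  have hsinp : Real.sin (ℓ / 4) * Real.sin (ℓ / 4) = (1 - c) / 2 := by
    rw [← pow_two]; exact hsin4
  rw [hℓm, hℓm2, hsin2, hsin4, hsinp, hcos]
  have hfx := hfpos x
  have hf₁x := hf₁pos x
  have hsq : Real.sqrt (f₁ x / f x) * f x = Real.sqrt (f x) * Real.sqrt (f₁ x) := by
    rw [Real.sqrt_div hf₁x.le, div_mul_eq_mul_div, mul_div_assoc, Real.div_sqrt, mul_comm]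
  rw [mul_assoc c⁻¹, hsq]
  set u := Real.sqrt (f x) with hu'
  set v := Real.sqrt (f₁ x) with hv'
  have hu : u ^ 2 = f x := Real.sq_sqrt hfx.le
  have hv : v ^ 2 = f₁ x := Real.sq_sqrt hf₁x.le
  rw [← hu, ← hv]
  have h1 : (1 : ℝ) - c ^ 2 ≠ 0 := by nlinarith
  have h2 : (2 : ℝ) + 2 * c ≠ 0 := by nlinarith
  field_simp
  ring
end
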